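/- arXiv:2102.06752 — 3 statements merged into one kernel-verified Lean document; each statement's English description precedes it below -/
import Mathlib

section
/- Let F : ℝ^p → ℝ be differentiable with L-Lipschitz gradient and bounded below by F*. Consider the recursion x_{t+1} = x_t − α·v_t with deterministic vectors v_t ∈ ℝ^p, where 0 < α ≤ 1/(2L). Then for every T ≥ 0: Σ_{t=0}^{T} ‖∇F(x_t)‖² ≤ 2(F(x_0) − F*)/α − (1/2)·Σ_{t=0}^{T} ‖v_t‖² + 2·Σ_{t=0}^{T} ‖v_t − ∇F(x_t)‖². -/
open Finset RealInnerProductSpace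

section Descent

variable {E : Type*} [NormedAddCommGroup E] [InnerProductSpace ℝ E] [CompleteSpace E]

lemma path_hasDerivAt (F : E → ℝ) (hdiff : Differentiable ℝ F) (x d : E) (t : ℝ) :
    HasDerivAt (fun s : ℝ => F (x + s • d)) ⟪gradient F (x + t • d), d⟫ t := by
  have h1 : HasDerivAt (fun s : ℝ => x + s • d) d t := by
    simpa using ((hasDerivAt_id t).smul_const d).const_add x
  have h2 : HasFDerivAt F (InnerProductSpace.toDual ℝ E (gradient F (x + t • d))) (x + t • d) :=
    ((hdiff (x + t • d)).hasGradientAt).hasFDerivAt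
  exact h2.comp_hasDerivAt t h1

lemma descent_lemma (F : E → ℝ) (L : ℝ) (hdiff : Differentiable ℝ F)
    (hlip : ∀ a b : E, ‖gradient F a - gradient F b‖ ≤ L * ‖a - b‖) (x y : E) :
    F y ≤ F x + ⟪gradient F x, y - x⟫ + L / 2 * ‖y - x‖ ^ 2 := by
  set d := y - x with hd
  set ψ : ℝ → ℝ := fun t => F (x + t • d) - t * ⟪gradient F x, d⟫ - L / 2 * t ^ 2 * ‖d‖ ^ 2
    with hψ
  have hder : ∀ t : ℝ, HasDerivAt ψ
      (⟪gradient F (x + t • d), d⟫ - ⟪gradient F x, d⟫ - L * t * ‖d‖ ^ 2) t := by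
    intro t
    have h1 := path_hasDerivAt F hdiff x d t
    have h2 : HasDerivAt (fun s : ℝ => s * ⟪gradient F x, d⟫) ⟪gradient F x, d⟫ t := by
      simpa using (hasDerivAt_id t).mul_const ⟪gradient F x, d⟫
    have h3 : HasDerivAt (fun s : ℝ => L / 2 * s ^ 2 * ‖d‖ ^ 2) (L * t * ‖d‖ ^ 2) t := by
      have := ((hasDerivAt_pow 2 t).const_mul (L / 2)).mul_const (‖d‖ ^ 2)
      refine this.congr_deriv ?_
      ring
    exact (h1.sub h2).sub h3
  have hanti : AntitoneOn ψ (Set.Icc (0:ℝ) 1) := by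
    apply antitoneOn_of_deriv_nonpos (convex_Icc 0 1)
    · exact (Differentiable.continuous fun t => (hder t).differentiableAt).continuousOn
    · intro t ht
      exact (hder t).differentiableAt.differentiableWithinAt
    · intro t ht
      rw [interior_Icc] at ht
      rw [(hder t).deriv]
      have hcs : ⟪gradient F (x + t • d) - gradient F x, d⟫ ≤
          ‖gradient F (x + t • d) - gradient F x‖ * ‖d‖ :=
        real_inner_le_norm _ _
      have hl : ‖gradient F (x + t • d) - gradient F x‖ ≤ L * (t * ‖d‖) := by
        have := hlip (x + t • d) x
        simpa [norm_smul, abs_of_nonneg ht.1.le, mul_assoc] using this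
      have hdn : (0:ℝ) ≤ ‖d‖ := norm_nonneg d
      nlinarith [inner_sub_left (𝕜 := ℝ) (gradient F (x + t • d)) (gradient F x) d]
  have key : ψ 1 ≤ ψ 0 := hanti (by norm_num) (by norm_num) (by norm_num)
  have h0 : ψ 0 = F x := by simp [hψ]
  have h1 : ψ 1 = F y - ⟪gradient F x, d⟫ - L / 2 * ‖d‖ ^ 2 := by
    simp [hψ, hd]
  rw [h0, h1] at key
  linarith

end Descent

theorem stmt_3 {p : ℕ} (F : EuclideanSpace ℝ (Fin p) → ℝ) (L Fstar α : ℝ)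
    (hL : 0 < L) (hdiff : Differentiable ℝ F)
    (hlip : ∀ a b : EuclideanSpace ℝ (Fin p),
      ‖gradient F a - gradient F b‖ ≤ L * ‖a - b‖)
    (hbelow : ∀ z, Fstar ≤ F z)
    (x v : ℕ → EuclideanSpace ℝ (Fin p))
    (hup : ∀ t, x (t + 1) = x t - α • v t)
    (hα0 : 0 < α) (hα : α ≤ 1 / (2 * L)) :
    ∀ T : ℕ,
      ∑ t ∈ Finset.range (T + 1), ‖gradient F (x t)‖ ^ 2 ≤
        2 * (F (x 0) - Fstar) / α
          - (1 / 2) * ∑ t ∈ Finset.range (T + 1), ‖v t‖ ^ 2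
          + 2 * ∑ t ∈ Finset.range (T + 1), ‖v t - gradient F (x t)‖ ^ 2 := by
  have hLα : L * α ≤ 1 / 2 := by
    have h := (le_div_iff₀ (by positivity : (0:ℝ) < 2 * L)).mp hα
    nlinarith
  -- per-step inequality
  have step : ∀ t : ℕ, ‖gradient F (x t)‖ ^ 2 ≤
      2 / α * (F (x t) - F (x (t + 1))) - (1 / 2) * ‖v t‖ ^ 2
        + ‖v t - gradient F (x t)‖ ^ 2 := by
    intro t
    have hdesc := descent_lemma F L hdiff hlip (x t) (x (t + 1))
    have hxy : x (t + 1) - x t = -(α • v t) := by rw [hup t]; abel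
    rw [hxy] at hdesc
    set g := gradient F (x t)
    have hin : ⟪g, -(α • v t)⟫ = -(α * ⟪g, v t⟫) := by
      rw [inner_neg_right, real_inner_smul_right]
    have hno : ‖-(α • v t)‖ ^ 2 = α ^ 2 * ‖v t‖ ^ 2 := by
      rw [norm_neg, norm_smul]
      simp [abs_of_pos hα0, mul_pow]
    rw [hin, hno] at hdesc
    have hexp : ⟪g, v t⟫ = (‖g‖ ^ 2 + ‖v t‖ ^ 2 - ‖v t - g‖ ^ 2) / 2 := by
      have := @norm_sub_sq_real (EuclideanSpace ℝ (Fin p)) _ _ (v t) g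
      have hc : ⟪v t, g⟫ = ⟪g, v t⟫ := real_inner_comm _ _
      linarith
    rw [hexp] at hdesc
    -- F x_{t+1} ≤ F x_t - α/2 ‖g‖² - α/2 ‖v‖² + α/2 ‖v-g‖² + Lα²/2 ‖v‖²
    have hvv : (0:ℝ) ≤ ‖v t‖ ^ 2 := by positivity
    have h2 : α / 2 * ‖g‖ ^ 2 ≤ F (x t) - F (x (t + 1)) - α / 4 * ‖v t‖ ^ 2
        + α / 2 * ‖v t - g‖ ^ 2 := by nlinarith
    have key : (‖g‖ ^ 2 + 1 / 2 * ‖v t‖ ^ 2 - ‖v t - g‖ ^ 2) * α ≤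
        2 * (F (x t) - F (x (t + 1))) := by nlinarith
    have key2 : ‖g‖ ^ 2 + 1 / 2 * ‖v t‖ ^ 2 - ‖v t - g‖ ^ 2 ≤
        2 * (F (x t) - F (x (t + 1))) / α := (le_div_iff₀ hα0).mpr key
    rw [div_mul_eq_mul_div]
    linarith
  intro T
  have hsum := Finset.sum_le_sum (fun t (_ : t ∈ Finset.range (T + 1)) => step t)
  rw [Finset.sum_add_distrib, Finset.sum_sub_distrib, ← Finset.mul_sum, ← Finset.mul_sum,
    ] at hsum
  have htel : ∑ t ∈ Finset.range (T + 1), (F (x t) - F (x (t + 1))) =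
      F (x 0) - F (x (T + 1)) := by
    rw [← Finset.sum_range_sub' (fun t => F (x t))]
  rw [htel] at hsum
  have hfin : F (x 0) - F (x (T + 1)) ≤ F (x 0) - Fstar := by
    have := hbelow (x (T + 1)); linarith
  have hnn : (0:ℝ) ≤ ∑ t ∈ Finset.range (T + 1), ‖v t - gradient F (x t)‖ ^ 2 :=
    Finset.sum_nonneg fun t _ => by positivity
  have h1 : 2 / α * (F (x 0) - F (x (T + 1))) ≤ 2 * (F (x 0) - Fstar) / α := by
    rw [div_mul_eq_mul_div]
    exact (div_le_div_iff_of_pos_right hα0).mpr (by nlinarith [hbelow (x (T + 1))])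
  linarith
end

section
/- Consensus error contraction (variant 1): let W ∈ ℝ^{np×np} satisfy ‖Wz − Jz‖ ≤ λ‖z − Jz‖ for all z, with JW = J, J² = J, where λ ∈ [0,1). If x⁺ = W(x − α·y), then ‖x⁺ − J·x⁺‖² ≤ ((1+λ²)/2)·‖x − Jx‖² + (2α²λ²/(1−λ²))·‖y − Jy‖². -/
theorem stmt_7 {E : Type*} [NormedAddCommGroup E] [InnerProductSpace ℝ E]
    (W J : E →L[ℝ] E)
    (hJW : ∀ z, J (W z) = J z) (hWJ : ∀ z, W (J z) = J z)
    (hJJ : ∀ z, J (J z) = J z)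
    (lam : ℝ) (hlam0 : 0 ≤ lam) (hlam1 : lam < 1)
    (hcontr : ∀ z, ‖W z - J z‖ ≤ lam * ‖z - J z‖)
    (α : ℝ) (x y xp : E) (hup : xp = W (x - α • y)) :
    ‖xp - J xp‖ ^ 2 ≤ ((1 + lam ^ 2) / 2) * ‖x - J x‖ ^ 2
      + (2 * α ^ 2 * lam ^ 2 / (1 - lam ^ 2)) * ‖y - J y‖ ^ 2 := by
  set z := x - α • y with hz
  have hJxp : J xp = J z := by rw [hup, hJW]
  have h1 : ‖xp - J xp‖ ≤ lam * ‖z - J z‖ := by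
    rw [hup]; rw [hJW]; exact hcontr z
  have hzJ : z - J z = (x - J x) - α • (y - J y) := by
    simp only [hz, map_sub, map_smul]
    module
  have h2 : ‖z - J z‖ ≤ ‖x - J x‖ + |α| * ‖y - J y‖ := by
    rw [hzJ]
    calc ‖(x - J x) - α • (y - J y)‖ ≤ ‖x - J x‖ + ‖α • (y - J y)‖ := norm_sub_le _ _
      _ = ‖x - J x‖ + |α| * ‖y - J y‖ := by rw [norm_smul, Real.norm_eq_abs]
  have h3 : ‖xp - J xp‖ ≤ lam * (‖x - J x‖ + |α| * ‖y - J y‖) := by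
    refine h1.trans ?_
    exact mul_le_mul_of_nonneg_left h2 hlam0
  have hnn : (0:ℝ) ≤ ‖xp - J xp‖ := norm_nonneg _
  have h4 : ‖xp - J xp‖ ^ 2 ≤ (lam * (‖x - J x‖ + |α| * ‖y - J y‖)) ^ 2 := by
    apply pow_le_pow_left₀ hnn h3
  refine h4.trans ?_
  set s := ‖x - J x‖ with hs
  set t := ‖y - J y‖ with ht
  have hs0 : 0 ≤ s := norm_nonneg _
  have ht0 : 0 ≤ t := norm_nonneg _
  have hl2 : 0 < 1 - lam ^ 2 := by nlinarith
  have habs : |α| ^ 2 = α ^ 2 := sq_abs α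
  have ha0 : 0 ≤ |α| := abs_nonneg α
  have hc : 2 * α ^ 2 * lam ^ 2 / (1 - lam ^ 2) * (1 - lam ^ 2) = 2 * α ^ 2 * lam ^ 2 :=
    div_mul_cancel₀ _ (ne_of_gt hl2)
  rw [← mul_le_mul_iff_of_pos_right hl2, add_mul, mul_assoc (2 * α ^ 2 * lam ^ 2 / (1 - lam ^ 2)),
    mul_comm (t ^ 2), ← mul_assoc, hc]
  have key : (1 + lam ^ 2) / 2 * s ^ 2 * (1 - lam ^ 2) + 2 * α ^ 2 * lam ^ 2 * t ^ 2
      - (lam * (s + |α| * t)) ^ 2 * (1 - lam ^ 2)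
      = ((1 - lam ^ 2) * s - 2 * lam ^ 2 * (|α| * t)) ^ 2 / 2
        + (1 - lam ^ 2) * (lam * (|α| * t)) ^ 2 := by
    rw [← habs]; ring
  linarith [sq_nonneg ((1 - lam ^ 2) * s - 2 * lam ^ 2 * (|α| * t)),
    mul_nonneg hl2.le (sq_nonneg (lam * (|α| * t)))]
end

section
/- Hybrid estimator mean-square recursion (scalar abstraction): let e_t = v_t − m_t be random vectors with v_t = β·g_t + (1−β)(g_t − h_t + v_{t-1}) where E[g_t | 𝓕_t] = m_t, E[g_t − h_t | 𝓕_t] = m_t − m_{t-1}, and v_{t-1}, m_{t-1}, m_t are 𝓕_t-measurable. Then E[‖v_t − m_t‖² | 𝓕_t] ≤ (1−β)²·‖v_{t-1} − m_{t-1}‖² + 2β²·E[‖g_t − m_t‖² | 𝓕_t] + 2(1−β)²·E[‖g_t − h_t‖² | 𝓕_t]. -/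
open MeasureTheory

local notation "⟪" x ", " y "⟫" => @inner ℝ _ _ x y

section Aux

lemma aux_condexp_clm_comm {Ω E F : Type*} {m m0 : MeasurableSpace Ω} (hm : m ≤ m0)
    {μ : Measure Ω} [IsFiniteMeasure μ]
    [NormedAddCommGroup E] [NormedSpace ℝ E] [CompleteSpace E]
    [NormedAddCommGroup F] [NormedSpace ℝ F] [CompleteSpace F]
    (T : E →L[ℝ] F) {Z : Ω → E} (hZ : Integrable Z μ) :
    μ[fun ω => T (Z ω)|m] =ᵐ[μ] fun ω => T ((μ[Z|m]) ω) := by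
  haveI : SigmaFinite (μ.trim hm) := inferInstance
  refine (ae_eq_condExp_of_forall_setIntegral_eq hm (T.integrable_comp hZ) ?_ ?_ ?_).symm
  · intro s _ _
    exact (T.integrable_comp integrable_condExp).integrableOn
  · intro s hs hμs
    rw [T.integral_comp_comm integrable_condExp.integrableOn,
        T.integral_comp_comm hZ.integrableOn, setIntegral_condExp hm hZ hs]
  · exact StronglyMeasurable.aestronglyMeasurable
      (T.continuous.comp_stronglyMeasurable stronglyMeasurable_condExp)

lemma aux_integrable_inner {Ω E : Type*} [NormedAddCommGroup E] [InnerProductSpace ℝ E]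
    {m0 : MeasurableSpace Ω} {μ : Measure Ω} {f g : Ω → E}
    (hf : MemLp f 2 μ) (hg : MemLp g 2 μ) :
    Integrable (fun ω => ⟪f ω, g ω⟫) μ := by
  have h := L2.integrable_inner (𝕜 := ℝ) (hf.toLp f) (hg.toLp g)
  refine h.congr ?_
  filter_upwards [hf.coeFn_toLp, hg.coeFn_toLp] with ω h1 h2
  rw [h1, h2]

lemma aux_condexp_inner_pullout {Ω : Type*} {mF m0 : MeasurableSpace Ω} (hm : mF ≤ m0)
    {μ : Measure Ω} [IsProbabilityMeasure μ] {p : ℕ}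
    {W Z : Ω → EuclideanSpace ℝ (Fin p)}
    (hWm : StronglyMeasurable[mF] W) (hW : MemLp W 2 μ) (hZ : MemLp Z 2 μ) :
    μ[fun ω => ⟪W ω, Z ω⟫|mF] =ᵐ[μ] fun ω => ⟪W ω, (μ[Z|mF]) ω⟫ := by
  have hWi : ∀ i, MemLp (fun ω => W ω i) 2 μ := fun i =>
    (EuclideanSpace.proj (𝕜 := ℝ) i).comp_memLp' hW
  have hZi : ∀ i, MemLp (fun ω => Z ω i) 2 μ := fun i =>
    (EuclideanSpace.proj (𝕜 := ℝ) i).comp_memLp' hZ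
  have hmul_int : ∀ i, Integrable (fun ω => W ω i * Z ω i) μ := by
    intro i
    have := aux_integrable_inner (hWi i) (hZi i)
    simpa [RCLike.inner_apply, mul_comm] using this
  have h1 : (fun ω => ⟪W ω, Z ω⟫) = ∑ i, (fun ω => W ω i * Z ω i) := by
    funext ω
    simp [PiLp.inner_apply, RCLike.inner_apply, mul_comm]
  have hsum : μ[fun ω => ⟪W ω, Z ω⟫|mF]
      =ᵐ[μ] ∑ i, μ[fun ω => W ω i * Z ω i|mF] := by
    rw [h1]
    exact condExp_finset_sum (m := mF) (fun i _ => hmul_int i)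
  have h3 : ∀ i, μ[fun ω => W ω i * Z ω i|mF]
      =ᵐ[μ] fun ω => W ω i * (μ[fun ω' => Z ω' i|mF]) ω := by
    intro i
    have hWim : StronglyMeasurable[mF] (fun ω => W ω i) :=
      (EuclideanSpace.proj (𝕜 := ℝ) i).continuous.comp_stronglyMeasurable hWm
    exact condExp_mul_of_stronglyMeasurable_left hWim (hmul_int i) ((hZi i).integrable one_le_two)
  have h4 : ∀ i, μ[fun ω' => Z ω' i|mF] =ᵐ[μ] fun ω => (μ[Z|mF]) ω i := fun i =>
    aux_condexp_clm_comm hm (EuclideanSpace.proj (𝕜 := ℝ) i) (hZ.integrable one_le_two)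
  have h34 : ∀ᵐ ω ∂μ, ∀ i, (μ[fun ω' => W ω' i * Z ω' i|mF]) ω = W ω i * (μ[Z|mF]) ω i := by
    rw [ae_all_iff]
    intro i
    filter_upwards [h3 i, (h4 i)] with ω hω h4ω
    rw [hω]
    rw [h4ω]
  filter_upwards [hsum, h34] with ω hω h34ω
  rw [hω]
  simp only [Finset.sum_apply]
  rw [Finset.sum_congr rfl (fun i _ => h34ω i)]
  simp [PiLp.inner_apply, RCLike.inner_apply, mul_comm]

end Aux

set_option maxHeartbeats 2000000 in
theorem stmt_12 {Ω : Type*} {mF m0 : MeasurableSpace Ω} (hm : mF ≤ m0)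
    (μ : Measure Ω) [IsProbabilityMeasure μ] {p : ℕ}
    (β : ℝ) (hβ0 : 0 < β) (hβ1 : β < 1)
    (g h mt mtm vtm v : Ω → EuclideanSpace ℝ (Fin p))
    (hgL2 : MemLp g 2 μ) (hhL2 : MemLp h 2 μ)
    (hmtL2 : MemLp mt 2 μ) (hmtmL2 : MemLp mtm 2 μ) (hvtmL2 : MemLp vtm 2 μ)
    (hmt : StronglyMeasurable[mF] mt) (hmtm : StronglyMeasurable[mF] mtm)
    (hvtm : StronglyMeasurable[mF] vtm)
    (hmean : μ[g | mF] =ᵐ[μ] mt)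
    (hdiffmean : μ[fun ω => g ω - h ω | mF] =ᵐ[μ] fun ω => mt ω - mtm ω)
    (hv : v = fun ω => β • g ω + (1 - β) • (g ω - h ω + vtm ω)) :
    ∀ᵐ ω ∂μ,
      (μ[fun ω' => ‖v ω' - mt ω'‖ ^ 2 | mF]) ω
        ≤ (1 - β) ^ 2 * ‖vtm ω - mtm ω‖ ^ 2
          + 2 * β ^ 2 * (μ[fun ω' => ‖g ω' - mt ω'‖ ^ 2 | mF]) ω
          + 2 * (1 - β) ^ 2 * (μ[fun ω' => ‖g ω' - h ω'‖ ^ 2 | mF]) ω := by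
  haveI : SigmaFinite (μ.trim hm) := inferInstance
  -- decomposition
  have h_decomp : ∀ ω, v ω - mt ω =
      (1 - β) • (vtm ω - mtm ω) +
        (β • (g ω - mt ω) + (1 - β) • (g ω - h ω - (mt ω - mtm ω))) := by
    intro ω
    simp only [hv]
    module
  -- MemLp facts
  have hPL2 : MemLp (fun ω => g ω - mt ω) 2 μ := hgL2.sub hmtL2
  have hDL2 : MemLp (fun ω => g ω - h ω) 2 μ := hgL2.sub hhL2
  have hcL2 : MemLp (fun ω => mt ω - mtm ω) 2 μ := hmtL2.sub hmtmL2
  have hQL2 : MemLp (fun ω => g ω - h ω - (mt ω - mtm ω)) 2 μ := hDL2.sub hcL2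
  have hAL2 : MemLp (fun ω =>
      β • (g ω - mt ω) + (1 - β) • (g ω - h ω - (mt ω - mtm ω))) 2 μ :=
    (hPL2.const_smul β).add (hQL2.const_smul (1 - β))
  have hBL2 : MemLp (fun ω => (1 - β) • (vtm ω - mtm ω)) 2 μ :=
    (hvtmL2.sub hmtmL2).const_smul (1 - β)
  have hBm : StronglyMeasurable[mF] (fun ω => (1 - β) • (vtm ω - mtm ω)) :=
    (hvtm.sub hmtm).const_smul (1 - β)
  have hcm : StronglyMeasurable[mF] (fun ω => mt ω - mtm ω) := hmt.sub hmtm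
  -- integrability of squared norms
  have hnsq : ∀ (f : Ω → EuclideanSpace ℝ (Fin p)), MemLp f 2 μ →
      Integrable (fun ω => ‖f ω‖ ^ 2) μ := by
    intro f hf
    exact (aux_integrable_inner hf hf).congr
      (Filter.Eventually.of_forall fun ω => real_inner_self_eq_norm_sq _)
  have intA : Integrable (fun ω =>
      ‖β • (g ω - mt ω) + (1 - β) • (g ω - h ω - (mt ω - mtm ω))‖ ^ 2) μ := hnsq _ hAL2
  have intB2 : Integrable (fun ω => ‖(1 - β) • (vtm ω - mtm ω)‖ ^ 2) μ := hnsq _ hBL2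
  have intP2 : Integrable (fun ω => ‖g ω - mt ω‖ ^ 2) μ := hnsq _ hPL2
  have intD2 : Integrable (fun ω => ‖g ω - h ω‖ ^ 2) μ := hnsq _ hDL2
  have intc2 : Integrable (fun ω => ‖mt ω - mtm ω‖ ^ 2) μ := hnsq _ hcL2
  have intQ2 : Integrable (fun ω => ‖g ω - h ω - (mt ω - mtm ω)‖ ^ 2) μ := hnsq _ hQL2
  have intBA : Integrable (fun ω => ⟪(1 - β) • (vtm ω - mtm ω),
      β • (g ω - mt ω) + (1 - β) • (g ω - h ω - (mt ω - mtm ω))⟫) μ :=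
    aux_integrable_inner hBL2 hAL2
  have int2BA : Integrable (fun ω => 2 * ⟪(1 - β) • (vtm ω - mtm ω),
      β • (g ω - mt ω) + (1 - β) • (g ω - h ω - (mt ω - mtm ω))⟫) μ := intBA.const_mul 2
  have intcD : Integrable (fun ω => ⟪mt ω - mtm ω, g ω - h ω⟫) μ :=
    aux_integrable_inner hcL2 hDL2
  have int2cD : Integrable (fun ω => 2 * ⟪mt ω - mtm ω, g ω - h ω⟫) μ := intcD.const_mul 2
  -- conditional mean of A is zero
  have hcondP : μ[fun ω => g ω - mt ω|mF] =ᵐ[μ] 0 := by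
    have h1 : μ[fun ω => g ω - mt ω|mF] =ᵐ[μ] μ[g|mF] - μ[mt|mF] :=
      condExp_sub (m := mF) (hgL2.integrable one_le_two) (hmtL2.integrable one_le_two)
    have h2 : μ[mt|mF] = mt :=
      condExp_of_stronglyMeasurable hm hmt (hmtL2.integrable one_le_two)
    filter_upwards [h1, hmean] with ω e1 e2
    simp only [Pi.sub_apply, Pi.zero_apply] at e1 ⊢
    rw [e1, h2, e2]
    simp
  have hcondQ : μ[fun ω => g ω - h ω - (mt ω - mtm ω)|mF] =ᵐ[μ] 0 := by
    have h1 : μ[fun ω => g ω - h ω - (mt ω - mtm ω)|mF] =ᵐ[μ]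
        μ[fun ω => g ω - h ω|mF] - μ[fun ω => mt ω - mtm ω|mF] :=
      condExp_sub (m := mF) (hDL2.integrable one_le_two) (hcL2.integrable one_le_two)
    have h2 : μ[fun ω => mt ω - mtm ω|mF] = fun ω => mt ω - mtm ω :=
      condExp_of_stronglyMeasurable hm hcm (hcL2.integrable one_le_two)
    filter_upwards [h1, hdiffmean] with ω e1 e2
    simp only [Pi.sub_apply, Pi.zero_apply] at e1 ⊢
    rw [e1, e2, h2]
    simp
  have hcondA : μ[fun ω =>
      β • (g ω - mt ω) + (1 - β) • (g ω - h ω - (mt ω - mtm ω))|mF] =ᵐ[μ] 0 := by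
    have h1 : μ[fun ω =>
        β • (g ω - mt ω) + (1 - β) • (g ω - h ω - (mt ω - mtm ω))|mF] =ᵐ[μ]
        μ[fun ω => β • (g ω - mt ω)|mF] +
          μ[fun ω => (1 - β) • (g ω - h ω - (mt ω - mtm ω))|mF] :=
      condExp_add (m := mF) ((hPL2.const_smul β).integrable one_le_two)
        ((hQL2.const_smul (1 - β)).integrable one_le_two)
    have h2 : μ[fun ω => β • (g ω - mt ω)|mF] =ᵐ[μ]
        β • μ[fun ω => g ω - mt ω|mF] := condExp_smul (m := mF) β (fun ω => g ω - mt ω)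
    have h3 : μ[fun ω => (1 - β) • (g ω - h ω - (mt ω - mtm ω))|mF] =ᵐ[μ]
        (1 - β) • μ[fun ω => g ω - h ω - (mt ω - mtm ω)|mF] :=
      condExp_smul (m := mF) (1 - β) (fun ω => g ω - h ω - (mt ω - mtm ω))
    filter_upwards [h1, h2, h3, hcondP, hcondQ] with ω e1 e2 e3 e4 e5
    simp only [Pi.add_apply, Pi.smul_apply, Pi.zero_apply] at e1 e2 e3 e4 e5 ⊢
    rw [e1, e2, e3, e4, e5]
    simp
  -- expansion of the squared norm
  have F1 : μ[fun ω' => ‖v ω' - mt ω'‖ ^ 2|mF] =ᵐ[μ]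
      μ[fun ω => ‖β • (g ω - mt ω) + (1 - β) • (g ω - h ω - (mt ω - mtm ω))‖ ^ 2 +
        (2 * ⟪(1 - β) • (vtm ω - mtm ω),
            β • (g ω - mt ω) + (1 - β) • (g ω - h ω - (mt ω - mtm ω))⟫ +
          ‖(1 - β) • (vtm ω - mtm ω)‖ ^ 2)|mF] := by
    refine condExp_congr_ae (Filter.Eventually.of_forall fun ω => ?_)
    dsimp only
    rw [h_decomp ω, norm_add_sq_real]
    ring
  have F2 : μ[fun ω => ‖β • (g ω - mt ω) + (1 - β) • (g ω - h ω - (mt ω - mtm ω))‖ ^ 2 +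
        (2 * ⟪(1 - β) • (vtm ω - mtm ω),
            β • (g ω - mt ω) + (1 - β) • (g ω - h ω - (mt ω - mtm ω))⟫ +
          ‖(1 - β) • (vtm ω - mtm ω)‖ ^ 2)|mF] =ᵐ[μ]
      μ[fun ω => ‖β • (g ω - mt ω) + (1 - β) • (g ω - h ω - (mt ω - mtm ω))‖ ^ 2|mF] +
        μ[fun ω => 2 * ⟪(1 - β) • (vtm ω - mtm ω),
            β • (g ω - mt ω) + (1 - β) • (g ω - h ω - (mt ω - mtm ω))⟫ +
          ‖(1 - β) • (vtm ω - mtm ω)‖ ^ 2|mF] :=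
    condExp_add (m := mF) intA (int2BA.add intB2)
  have F3 : μ[fun ω => 2 * ⟪(1 - β) • (vtm ω - mtm ω),
            β • (g ω - mt ω) + (1 - β) • (g ω - h ω - (mt ω - mtm ω))⟫ +
          ‖(1 - β) • (vtm ω - mtm ω)‖ ^ 2|mF] =ᵐ[μ]
      μ[fun ω => 2 * ⟪(1 - β) • (vtm ω - mtm ω),
            β • (g ω - mt ω) + (1 - β) • (g ω - h ω - (mt ω - mtm ω))⟫|mF] +
        μ[fun ω => ‖(1 - β) • (vtm ω - mtm ω)‖ ^ 2|mF] :=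
    condExp_add (m := mF) int2BA intB2
  have F4 : μ[fun ω => 2 * ⟪(1 - β) • (vtm ω - mtm ω),
            β • (g ω - mt ω) + (1 - β) • (g ω - h ω - (mt ω - mtm ω))⟫|mF] =ᵐ[μ]
      (2 : ℝ) • μ[fun ω => ⟪(1 - β) • (vtm ω - mtm ω),
            β • (g ω - mt ω) + (1 - β) • (g ω - h ω - (mt ω - mtm ω))⟫|mF] :=
    condExp_smul (m := mF) (2 : ℝ) (fun ω => ⟪(1 - β) • (vtm ω - mtm ω),
      β • (g ω - mt ω) + (1 - β) • (g ω - h ω - (mt ω - mtm ω))⟫)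
  have F5 : μ[fun ω => ⟪(1 - β) • (vtm ω - mtm ω),
            β • (g ω - mt ω) + (1 - β) • (g ω - h ω - (mt ω - mtm ω))⟫|mF] =ᵐ[μ] 0 := by
    have h1 := aux_condexp_inner_pullout hm hBm hBL2 hAL2
    filter_upwards [h1, hcondA] with ω e1 e2
    simp only [Pi.zero_apply] at e2 ⊢
    rw [e1, e2]
    simp
  have F6 : μ[fun ω => ‖(1 - β) • (vtm ω - mtm ω)‖ ^ 2|mF] =
      fun ω => ‖(1 - β) • (vtm ω - mtm ω)‖ ^ 2 :=
    condExp_of_stronglyMeasurable hm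
      ((continuous_pow 2).comp_stronglyMeasurable hBm.norm) intB2
  -- bound on the conditional second moment of A
  have G1 : ∀ ω, ‖β • (g ω - mt ω) + (1 - β) • (g ω - h ω - (mt ω - mtm ω))‖ ^ 2 ≤
      2 * β ^ 2 * ‖g ω - mt ω‖ ^ 2 +
        2 * (1 - β) ^ 2 * ‖g ω - h ω - (mt ω - mtm ω)‖ ^ 2 := by
    intro ω
    have h1 : ‖β • (g ω - mt ω) + (1 - β) • (g ω - h ω - (mt ω - mtm ω))‖ ≤
        ‖β • (g ω - mt ω)‖ + ‖(1 - β) • (g ω - h ω - (mt ω - mtm ω))‖ := norm_add_le _ _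
    rw [norm_smul, norm_smul, Real.norm_eq_abs, Real.norm_eq_abs, abs_of_pos hβ0,
      abs_of_pos (by linarith : (0:ℝ) < 1 - β)] at h1
    nlinarith [norm_nonneg (β • (g ω - mt ω) + (1 - β) • (g ω - h ω - (mt ω - mtm ω))),
      norm_nonneg (g ω - mt ω), norm_nonneg (g ω - h ω - (mt ω - mtm ω)),
      sq_nonneg (β * ‖g ω - mt ω‖ - (1 - β) * ‖g ω - h ω - (mt ω - mtm ω)‖)]
  have intG : Integrable (fun ω => 2 * β ^ 2 * ‖g ω - mt ω‖ ^ 2 +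
      2 * (1 - β) ^ 2 * ‖g ω - h ω - (mt ω - mtm ω)‖ ^ 2) μ :=
    (intP2.const_mul _).add (intQ2.const_mul _)
  have G2 : μ[fun ω =>
      ‖β • (g ω - mt ω) + (1 - β) • (g ω - h ω - (mt ω - mtm ω))‖ ^ 2|mF] ≤ᵐ[μ]
      μ[fun ω => 2 * β ^ 2 * ‖g ω - mt ω‖ ^ 2 +
        2 * (1 - β) ^ 2 * ‖g ω - h ω - (mt ω - mtm ω)‖ ^ 2|mF] :=
    condExp_mono intA intG (Filter.Eventually.of_forall G1)
  have G3 : μ[fun ω => 2 * β ^ 2 * ‖g ω - mt ω‖ ^ 2 +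
        2 * (1 - β) ^ 2 * ‖g ω - h ω - (mt ω - mtm ω)‖ ^ 2|mF] =ᵐ[μ]
      (2 * β ^ 2 : ℝ) • μ[fun ω => ‖g ω - mt ω‖ ^ 2|mF] +
        (2 * (1 - β) ^ 2 : ℝ) • μ[fun ω => ‖g ω - h ω - (mt ω - mtm ω)‖ ^ 2|mF] := by
    have h1 : μ[fun ω => 2 * β ^ 2 * ‖g ω - mt ω‖ ^ 2 +
        2 * (1 - β) ^ 2 * ‖g ω - h ω - (mt ω - mtm ω)‖ ^ 2|mF] =ᵐ[μ]
        μ[fun ω => 2 * β ^ 2 * ‖g ω - mt ω‖ ^ 2|mF] +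
          μ[fun ω => 2 * (1 - β) ^ 2 * ‖g ω - h ω - (mt ω - mtm ω)‖ ^ 2|mF] :=
      condExp_add (m := mF) (intP2.const_mul _) (intQ2.const_mul _)
    have h2 : μ[fun ω => 2 * β ^ 2 * ‖g ω - mt ω‖ ^ 2|mF] =ᵐ[μ]
        (2 * β ^ 2 : ℝ) • μ[fun ω => ‖g ω - mt ω‖ ^ 2|mF] :=
      condExp_smul (m := mF) (2 * β ^ 2 : ℝ) (fun ω => ‖g ω - mt ω‖ ^ 2)
    have h3 : μ[fun ω => 2 * (1 - β) ^ 2 * ‖g ω - h ω - (mt ω - mtm ω)‖ ^ 2|mF] =ᵐ[μ]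
        (2 * (1 - β) ^ 2 : ℝ) • μ[fun ω => ‖g ω - h ω - (mt ω - mtm ω)‖ ^ 2|mF] :=
      condExp_smul (m := mF) (2 * (1 - β) ^ 2 : ℝ) (fun ω => ‖g ω - h ω - (mt ω - mtm ω)‖ ^ 2)
    filter_upwards [h1, h2, h3] with ω e1 e2 e3
    simp only [Pi.add_apply] at e1 ⊢
    rw [e1, e2, e3]
  -- conditional variance bound
  have V1 : μ[fun ω => ‖g ω - h ω - (mt ω - mtm ω)‖ ^ 2|mF] =ᵐ[μ]
      μ[fun ω => ‖g ω - h ω‖ ^ 2 - 2 * ⟪mt ω - mtm ω, g ω - h ω⟫ +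
        ‖mt ω - mtm ω‖ ^ 2|mF] := by
    refine condExp_congr_ae (Filter.Eventually.of_forall fun ω => ?_)
    dsimp only
    rw [norm_sub_sq_real, real_inner_comm]
  have V2 : μ[fun ω => ‖g ω - h ω‖ ^ 2 - 2 * ⟪mt ω - mtm ω, g ω - h ω⟫ +
        ‖mt ω - mtm ω‖ ^ 2|mF] =ᵐ[μ]
      (μ[fun ω => ‖g ω - h ω‖ ^ 2|mF] -
        μ[fun ω => 2 * ⟪mt ω - mtm ω, g ω - h ω⟫|mF]) +
        μ[fun ω => ‖mt ω - mtm ω‖ ^ 2|mF] := by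
    have h1 : μ[fun ω => ‖g ω - h ω‖ ^ 2 - 2 * ⟪mt ω - mtm ω, g ω - h ω⟫ +
        ‖mt ω - mtm ω‖ ^ 2|mF] =ᵐ[μ]
        μ[fun ω => ‖g ω - h ω‖ ^ 2 - 2 * ⟪mt ω - mtm ω, g ω - h ω⟫|mF] +
          μ[fun ω => ‖mt ω - mtm ω‖ ^ 2|mF] := condExp_add (m := mF) (intD2.sub int2cD) intc2
    have h2 : μ[fun ω => ‖g ω - h ω‖ ^ 2 - 2 * ⟪mt ω - mtm ω, g ω - h ω⟫|mF] =ᵐ[μ]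
        μ[fun ω => ‖g ω - h ω‖ ^ 2|mF] -
          μ[fun ω => 2 * ⟪mt ω - mtm ω, g ω - h ω⟫|mF] := condExp_sub (m := mF) intD2 int2cD
    filter_upwards [h1, h2] with ω e1 e2
    simp only [Pi.add_apply, Pi.sub_apply] at e1 ⊢
    rw [e1, e2]
    simp only [Pi.sub_apply]
  have V3 : μ[fun ω => 2 * ⟪mt ω - mtm ω, g ω - h ω⟫|mF] =ᵐ[μ]
      fun ω => 2 * ‖mt ω - mtm ω‖ ^ 2 := by
    have h1 : μ[fun ω => 2 * ⟪mt ω - mtm ω, g ω - h ω⟫|mF] =ᵐ[μ]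
        (2 : ℝ) • μ[fun ω => ⟪mt ω - mtm ω, g ω - h ω⟫|mF] :=
      condExp_smul (m := mF) (2 : ℝ) (fun ω => ⟪mt ω - mtm ω, g ω - h ω⟫)
    have h2 := aux_condexp_inner_pullout hm hcm hcL2 hDL2
    filter_upwards [h1, h2, hdiffmean] with ω e1 e2 e3
    simp only [Pi.smul_apply, smul_eq_mul] at e1 ⊢
    rw [e1, e2, e3, real_inner_self_eq_norm_sq]
  have V4 : μ[fun ω => ‖mt ω - mtm ω‖ ^ 2|mF] = fun ω => ‖mt ω - mtm ω‖ ^ 2 :=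
    condExp_of_stronglyMeasurable hm
      ((continuous_pow 2).comp_stronglyMeasurable hcm.norm) intc2
  -- put everything together
  have F6' : μ[fun ω => ‖(1 - β) • (vtm ω - mtm ω)‖ ^ 2|mF] =ᵐ[μ]
      fun ω => ‖(1 - β) • (vtm ω - mtm ω)‖ ^ 2 :=
    Filter.Eventually.of_forall fun ω => congrFun F6 ω
  have V4' : μ[fun ω => ‖mt ω - mtm ω‖ ^ 2|mF] =ᵐ[μ]
      fun ω => ‖mt ω - mtm ω‖ ^ 2 :=
    Filter.Eventually.of_forall fun ω => congrFun V4 ω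
  filter_upwards [F1, F2, F3, F4, F5, G2, G3, V1, V2, V3, F6', V4'] with ω e1 e2 e3 e4 e5
    eG2 eG3 eV1 eV2 eV3 eF6 eV4
  simp only [Pi.add_apply, Pi.sub_apply, Pi.smul_apply, Pi.zero_apply, smul_eq_mul]
    at e1 e2 e3 e4 e5 eG2 eG3 eV1 eV2 eV3 eF6 eV4 ⊢
  have hBnorm : ‖(1 - β) • (vtm ω - mtm ω)‖ ^ 2 = (1 - β) ^ 2 * ‖vtm ω - mtm ω‖ ^ 2 := by
    rw [norm_smul, Real.norm_eq_abs, mul_pow, sq_abs]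
  have hfac : (0:ℝ) ≤ 2 * (1 - β) ^ 2 := by positivity
  have hQle : (μ[fun ω' => ‖g ω' - h ω' - (mt ω' - mtm ω')‖ ^ 2|mF]) ω ≤
      (μ[fun ω' => ‖g ω' - h ω'‖ ^ 2|mF]) ω := by
    have hc2 : (0:ℝ) ≤ ‖mt ω - mtm ω‖ ^ 2 := sq_nonneg _
    linarith [eV1, eV2, eV3, eV4]
  have hmul := mul_le_mul_of_nonneg_left hQle hfac
  linarith [e1, e2, e3, e4, e5, eG2, eG3, eF6, hBnorm, hmul]
end
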